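/- Let p be a prime and x a p-adic integer, and set s := (x + ⟨−x⟩_p)/p. Then (x)_p (1−x)_p / (p!)^2 ≡ s(1−s)·(1 + 2p·H_{⟨−x⟩_p}) (mod p^2). -/

import Mathlib

set_option maxHeartbeats 1000000
open Finset


def Efun : ℕ → ℕ
  | 0 => 0
  | n+1 => n.factorial + (n+1) * Efun n

lemma gadget {R : Type*} [CommRing R] (n : ℕ) (u : R) :
    ∃ z : R, ∏ j ∈ range n, (((j+1 : ℕ) : R) + u)
      = (n.factorial : R) + (Efun n : R) * u + z * u^2 := by
  induction n with
  | zero => exact ⟨0, by simp [Efun]⟩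
  | succ n ih =>
    obtain ⟨z, hz⟩ := ih
    refine ⟨(Efun n : R) + z * ((n+1 : ℕ) : R) + z * u, ?_⟩
    rw [prod_range_succ, hz]
    have h1 : ((n+1).factorial : R) = (n.factorial : R) * ((n+1:ℕ) : R) := by
      push_cast [Nat.factorial_succ]; ring
    have h2 : (Efun (n+1) : R) = (n.factorial : R) + ((n+1:ℕ):R) * (Efun n : R) := by
      show ((Efun (n+1) : ℕ) : R) = _
      rw [show Efun (n+1) = n.factorial + (n+1) * Efun n from rfl]
      push_cast; ring
    rw [h1, h2]; push_cast; ring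

lemma fact_mul_prod (a b : ℕ) : a.factorial * ∏ j ∈ range b, (a+1+j) = (a+b).factorial := by
  induction b with
  | zero => simp
  | succ b ih =>
    rw [prod_range_succ, ← mul_assoc, ih, ← Nat.add_assoc, Nat.factorial_succ]
    ring

lemma asc_eval_prod {R : Type*} [CommRing R] (n : ℕ) (y : R) :
    (ascPochhammer R n).eval y = ∏ j ∈ range n, (y + (j : R)) := by
  induction n with
  | zero => simp
  | succ n ih =>
    rw [ascPochhammer_succ_right, prod_range_succ, ← ih]
    simp [Polynomial.eval_mul]


lemma prod_Icc_one_factorial (n : ℕ) : (∏ i ∈ Icc 1 n, i) = n.factorial := by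
  rw [← Finset.Ico_add_one_right_eq_Icc]; exact Finset.prod_Ico_id_eq_factorial n

lemma Efun_eq_sum (n : ℕ) :
    Efun n = ∑ k ∈ Icc 1 n, ∏ i ∈ (Icc 1 n).erase k, i := by
  induction n with
  | zero => simp [Efun]
  | succ n ih =>
    have hnot : (n+1) ∉ Icc 1 n := by simp
    rw [← Finset.insert_Icc_right_eq_Icc_add_one (by omega), Finset.sum_insert hnot]
    have h1 : (insert (n+1) (Icc 1 n)).erase (n+1) = Icc 1 n :=
      Finset.erase_insert hnot
    have h2 : ∀ k ∈ Icc 1 n, ∏ i ∈ (insert (n+1) (Icc 1 n)).erase k, i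
        = (n+1) * ∏ i ∈ (Icc 1 n).erase k, i := by
      intro k hk
      have hkne : (n+1 : ℕ) ≠ k := by simp at hk; omega
      rw [Finset.erase_insert_of_ne hkne, Finset.prod_insert (by simp)]
    rw [h1, Finset.sum_congr rfl h2, ← Finset.mul_sum, ← ih, prod_Icc_one_factorial]
    rfl

lemma Epm1 (p : ℕ) [hp : Fact p.Prime] (hodd : Odd p) : ((Efun (p-1) : ℕ) : ZMod p) = 0 := by
  have hp1 : 1 < p := hp.out.one_lt
  rw [Efun_eq_sum]
  push_cast
  apply Finset.sum_involution (g := fun k _ => p - k)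
  · -- f k + f (p-k) = 0
    intro k hk
    simp only [mem_Icc] at hk
    have hkp : k < p := by omega
    have hmem : p - k ∈ Icc 1 (p-1) := by simp [mem_Icc]; omega
    have e1 : (k : ZMod p) * ∏ i ∈ (Icc 1 (p-1)).erase k, (i : ZMod p)
        = ∏ i ∈ Icc 1 (p-1), (i : ZMod p) := by
      exact Finset.mul_prod_erase _ _ (by simp [mem_Icc]; omega)
    have e2 : ((p - k : ℕ) : ZMod p) * ∏ i ∈ (Icc 1 (p-1)).erase (p-k), (i : ZMod p)
        = ∏ i ∈ Icc 1 (p-1), (i : ZMod p) :=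
      Finset.mul_prod_erase _ _ hmem
    have hcast : ((p - k : ℕ) : ZMod p) = -(k : ZMod p) := by
      have : ((p - k : ℕ) : ZMod p) + (k : ZMod p) = ((p : ℕ) : ZMod p) := by
        rw [← Nat.cast_add]; congr 1; omega
      rw [ZMod.natCast_self] at this
      exact eq_neg_of_add_eq_zero_left this
    have hk0 : (k : ZMod p) ≠ 0 := by
      rw [Ne, ZMod.natCast_eq_zero_iff]
      intro h; exact absurd (Nat.le_of_dvd (by omega) h) (by omega)
    rw [hcast] at e2
    have := e1.trans e2.symm
    field_simp at this ⊢
    have h3 : (k : ZMod p) * (∏ i ∈ (Icc 1 (p-1)).erase k, (i : ZMod p)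
        + ∏ i ∈ (Icc 1 (p-1)).erase (p-k), (i : ZMod p)) = 0 := by
      rw [mul_add, this]; ring
    rcases mul_eq_zero.mp h3 with h | h
    · exact absurd h hk0
    · exact h
  · -- g k ≠ k
    intro k hk
    simp only [mem_Icc] at hk
    rcases hodd with ⟨m, hm⟩
    omega
  · intro k hk; simp only [mem_Icc] at hk ⊢; omega
  · intro k hk; simp only [mem_Icc] at hk; omega

lemma C1 (p : ℕ) [hp : Fact p.Prime] (hodd : Odd p) (r : ℕ) (hr : r ≤ p - 1) :
    ((r.factorial * Efun (p-1-r) : ℕ) : ZMod p)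
      = (((p-1-r).factorial * Efun r : ℕ) : ZMod p) := by
  induction r with
  | zero =>
    simp only [Nat.sub_zero, Nat.factorial_zero, one_mul]
    rw [show Efun 0 = 0 from rfl]
    simp [Epm1 p hodd]
  | succ r ih =>
    have hp1 : 1 < p := hp.out.one_lt
    have hr' : r ≤ p - 1 := by omega
    have ihr := ih hr'
    set m' := p - 1 - (r+1) with hm'
    have hmm : p - 1 - r = m' + 1 := by omega
    rw [hmm] at ihr
    have hE : Efun (m'+1) = m'.factorial + (m'+1) * Efun m' := rfl
    have hE2 : Efun (r+1) = r.factorial + (r+1) * Efun r := rfl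
    have hcast : ((m' + 1 : ℕ) : ZMod p) = -((r+1 : ℕ) : ZMod p) := by
      have : ((m' + 1 : ℕ) : ZMod p) + ((r+1 : ℕ) : ZMod p) = ((p : ℕ) : ZMod p) := by
        rw [← Nat.cast_add]; congr 1; omega
      rw [ZMod.natCast_self] at this
      exact eq_neg_of_add_eq_zero_left this
    rw [hE, Nat.factorial_succ] at ihr
    rw [hE2, Nat.factorial_succ]
    push_cast at ihr ⊢
    rw [show ((m' : ZMod p) + 1) = -((r : ZMod p) + 1) by push_cast at hcast; linear_combination hcast] at ihr
    linear_combination -ihr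


lemma bracket_nilp {S : Type*} [CommRing S] (a b e f q t g : S)
    (hq : q^2 = 0) (hg : a*f = b*e + q*g) :
    a * (a - e*(q*t)) * (b + f*(q*t)) * (b + f*(q*(t-1))) * (a + e*(q*(1-t)))
      = (a*(b - q*f))^2 * (a + 2*q*e) := by
  linear_combination (1*a*e^2*f^2*q^2*t^2 - 2*a*e^2*f^2*q^2*t^3 + 1*a*e^2*f^2*q^2*t^4 + 1*a*b*e^2*f*q*t - 3*a*b*e^2*f*q*t^2 + 2*a*b*e^2*f*q*t^3 - 1*a*b^2*e^2*t + 1*a*b^2*e^2*t^2 - 2*a^2*e*f^2*q - 1*a^2*e*f^2*q*t + 3*a^2*e*f^2*q*t^2 - 2*a^2*e*f^2*q*t^3 + 1*a^2*b*g + 2*a^2*b*t*g + 3*a^2*b*e*f + 4*a^2*b*e*f*t - 4*a^2*b*e*f*t^2 - 1*a^3*f^2 - 1*a^3*f^2*t + 1*a^3*f^2*t^2) * hq + (a^2*b*q + 2*a^2*b*q*t) * hg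

lemma bracket {R : Type*} [CommRing R] (a b e f P t g z₀ z₁ z₂ z₃ z₄ : R)
    (hg : a*f = b*e + P*g) :
    ∃ w : R, a * (a - e*(P*t) + z₁*(P*t)^2) * (b + f*(P*t) + z₂*(P*t)^2)
        * (b + f*(P*(t-1)) + z₃*(P*(t-1))^2) * (a + e*(P*(1-t)) + z₄*(P*(1-t))^2)
      = (a*(b - P*f + z₀*P^2))^2 * (a + 2*P*e) + P^2 * w := by
  have key : P^2 ∣ (a * (a - e*(P*t) + z₁*(P*t)^2) * (b + f*(P*t) + z₂*(P*t)^2)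
        * (b + f*(P*(t-1)) + z₃*(P*(t-1))^2) * (a + e*(P*(1-t)) + z₄*(P*(1-t))^2)
      - (a*(b - P*f + z₀*P^2))^2 * (a + 2*P*e)) := by
    rw [← Ideal.mem_span_singleton, ← Ideal.Quotient.eq]
    set π := Ideal.Quotient.mk (Ideal.span {P^2}) with hπ
    have hq : π P ^ 2 = 0 := by
      rw [← map_pow, Ideal.Quotient.eq_zero_iff_mem]
      exact Ideal.mem_span_singleton_self _
    simp only [map_mul, map_add, map_sub, map_pow, map_one, map_ofNat]
    have h1 : π a - π e*(π P*π t) + π z₁*(π P*π t)^2 = π a - π e*(π P*π t) := by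
      linear_combination (π z₁ * π t^2) * hq
    have h2 : π b + π f*(π P*π t) + π z₂*(π P*π t)^2 = π b + π f*(π P*π t) := by
      linear_combination (π z₂ * π t^2) * hq
    have h3 : π b + π f*(π P*(π t-1)) + π z₃*(π P*(π t-1))^2 = π b + π f*(π P*(π t-1)) := by
      linear_combination (π z₃ * (π t-1)^2) * hq
    have h4 : π a + π e*(π P*(1-π t)) + π z₄*(π P*(1-π t))^2 = π a + π e*(π P*(1-π t)) := by
      linear_combination (π z₄ * (1-π t)^2) * hq
    have h0 : π b - π P*π f + π z₀*π P^2 = π b - π P*π f := by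
      linear_combination (π z₀) * hq
    rw [h1, h2, h3, h4, h0]
    have hg' : π a * π f = π b * π e + π P * π g := by
      have := congrArg π hg
      simpa only [map_mul, map_add] using this
    exact bracket_nilp (π a) (π b) (π e) (π f) (π P) (π t) (π g) hq hg'
  obtain ⟨w, hw⟩ := key
  exact ⟨w, by linear_combination hw⟩



lemma cast_sub_helper {R : Type*} [CommRing R] (r j : ℕ) (h : j < r) :
    ((r - 1 - j : ℕ) : R) = (r:R) - 1 - (j:R) := by
  have h1 : r - 1 - j = r - (1+j) := by omega
  rw [h1, Nat.cast_sub (by omega)]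
  push_cast; ring

lemma neg_prod {R : Type*} [CommRing R] (n : ℕ) (f g : ℕ → R)
    (h : ∀ j ∈ range n, f j = - g j) :
    ∏ j ∈ range n, f j = (-1)^n * ∏ j ∈ range n, g j := by
  calc ∏ j ∈ range n, f j = ∏ j ∈ range n, ((-1 : R) * g j) := by
        apply Finset.prod_congr rfl; intro j hj; rw [h j hj]; ring
    _ = (∏ _j ∈ range n, (-1:R)) * ∏ j ∈ range n, g j := Finset.prod_mul_distrib
    _ = (-1)^n * ∏ j ∈ range n, g j := by rw [Finset.prod_const, Finset.card_range]

lemma decomp1 {R : Type*} [CommRing R] (p r m : ℕ) (hp : p = r + 1 + m) (t : R) :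
    (ascPochhammer R p).eval ((p : R)*t - (r : R))
      = (p : R)*t * ((-1)^r * ∏ j ∈ range r, (((j+1:ℕ) : R) + -((p:R)*t)))
          * (∏ j ∈ range m, (((j+1:ℕ):R) + (p:R)*t)) := by
  rw [asc_eval_prod]
  subst hp
  rw [prod_range_add, prod_range_succ]
  have hP : ((r + 1 + m : ℕ) : R) = (r:R) + 1 + (m:R) := by push_cast; ring
  set P : R := ((r + 1 + m : ℕ) : R) with hPdef
  set x : R := P*t - r with hx
  have e1 : ∏ j ∈ range r, (x + (j:R)) = (-1)^r * ∏ j ∈ range r, (((j+1:ℕ) : R) + -(P*t)) := by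
    rw [← Finset.prod_range_reflect (fun j => x + (j:R)) r]
    apply neg_prod
    intro j hj
    simp only [mem_range] at hj
    rw [cast_sub_helper r j hj, hx]
    push_cast
    ring
  have e2 : x + (r:R) = P*t := by rw [hx]; ring
  have e3 : ∏ j ∈ range m, (x + ((r + 1 + j : ℕ):R)) = ∏ j ∈ range m, (((j+1:ℕ):R) + P*t) := by
    apply Finset.prod_congr rfl
    intro j hj
    rw [hx, hP]
    push_cast
    ring
  rw [e1, e2, e3]
  ring

lemma decomp2 {R : Type*} [CommRing R] (p r m : ℕ) (hp : p = r + 1 + m) (t : R) :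
    (ascPochhammer R p).eval (1 - ((p : R)*t - (r : R)))
      = (p : R)*(1-t) * ((-1)^m * ∏ j ∈ range m, (((j+1:ℕ) : R) + (p:R)*(t-1)))
          * (∏ j ∈ range r, (((j+1:ℕ):R) + (p:R)*(1-t))) := by
  rw [asc_eval_prod]
  have hp' : p = m + 1 + r := by omega
  rw [hp']
  rw [prod_range_add, prod_range_succ]
  have hP : ((p : ℕ) : R) = (m:R) + 1 + (r:R) := by rw [hp']; push_cast; ring
  rw [← hp']
  set P : R := ((p : ℕ) : R) with hPdef
  set y : R := 1 - (P*t - r) with hy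
  have e1 : ∏ j ∈ range m, (y + (j:R)) = (-1)^m * ∏ j ∈ range m, (((j+1:ℕ) : R) + P*(t-1)) := by
    rw [← Finset.prod_range_reflect (fun j => y + (j:R)) m]
    apply neg_prod
    intro j hj
    simp only [mem_range] at hj
    rw [cast_sub_helper m j hj, hy, hP]
    push_cast
    ring
  have e2 : y + (m:R) = P*(1-t) := by rw [hy, hP]; ring
  have e3 : ∏ j ∈ range r, (y + ((m + 1 + j : ℕ):R)) = ∏ j ∈ range r, (((j+1:ℕ):R) + P*(1-t)) := by
    apply Finset.prod_congr rfl
    intro j hj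
    rw [hy, hP]
    push_cast
    ring
  rw [e1, e2, e3]
  ring

lemma Kfact {R : Type*} [CommRing R] (p r m : ℕ) (hp : p = r + 1 + m) :
    (-1)^m * (r.factorial : R) * ∏ j ∈ range m, (((j+1:ℕ):R) + -((p:ℕ):R))
      = ((p-1).factorial : R) := by
  have e1 : ∏ j ∈ range m, (((j+1:ℕ):R) + -((p:ℕ):R))
      = (-1)^m * ∏ j ∈ range m, ((p-1-j : ℕ) : R) := by
    apply neg_prod
    intro j hj
    simp only [mem_range] at hj
    have : ((p - 1 - j : ℕ) : R) = (p:R) - 1 - (j:R) := by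
      have h1 : p - 1 - j = p - (1+j) := by omega
      rw [h1, Nat.cast_sub (by omega)]
      push_cast; ring
    rw [this]
    push_cast
    ring
  rw [e1]
  have e2 : ((-1:R))^m * (r.factorial : R) * (-1)^m = (r.factorial : R) := by
    have : ((-1:R))^m * (-1)^m = 1 := by
      rw [← pow_add, ← two_mul, pow_mul]
      simp
    linear_combination (r.factorial : R) * this
  calc (-1)^m * (r.factorial:R) * ((-1)^m * ∏ j ∈ range m, ((p-1-j:ℕ):R))
      = ((-1)^m * (r.factorial:R) * (-1)^m) * ∏ j ∈ range m, ((p-1-j:ℕ):R) := by ring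
    _ = (r.factorial:R) * ∏ j ∈ range m, ((p-1-j:ℕ):R) := by rw [e2]
    _ = ((p-1).factorial : R) := ?_
  rw [← Nat.cast_prod, ← Nat.cast_mul]
  congr 1
  have e3 : ∏ j ∈ range m, (p-1-j) = ∏ j ∈ range m, (r+1+j) := by
    rw [← Finset.prod_range_reflect (fun j => p-1-j) m]
    apply Finset.prod_congr rfl
    intro j hj
    simp only [mem_range] at hj
    omega
  rw [e3, fact_mul_prod]
  congr 1
  omega

lemma core (p : ℕ) [hp : Fact p.Prime] (r m : ℕ) (hrm : p = r + 1 + m) (t : ℤ_[p]) :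
    ∃ w : ℤ_[p], (r.factorial : ℤ_[p])
        * ((ascPochhammer ℤ_[p] p).eval ((p:ℤ_[p])*t - (r:ℤ_[p])))
        * ((ascPochhammer ℤ_[p] p).eval (1 - ((p:ℤ_[p])*t - (r:ℤ_[p]))))
      = (p:ℤ_[p])^2 * (t * (1-t))
          * (((p-1).factorial : ℤ_[p])^2
            * ((r.factorial:ℤ_[p]) + 2*(p:ℤ_[p])*(Efun r : ℤ_[p])))
        + (p:ℤ_[p])^4 * w := by
  rcases eq_or_ne p 2 with h2 | hne
  · subst h2
    have hcase : (r = 0 ∧ m = 1) ∨ (r = 1 ∧ m = 0) := by omega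
    have hexp : ∀ y : ℤ_[2], (ascPochhammer ℤ_[2] 2).eval y = y * (y+1) := by
      intro y
      rw [asc_eval_prod]
      simp [Finset.prod_range_succ]
    rcases hcase with ⟨hr, hm⟩ | ⟨hr, hm⟩ <;> subst hr <;>
      simp only [hexp]
    · refine ⟨-(t^3*(1-t)), ?_⟩
      rw [show Efun 0 = 0 from rfl]
      norm_num [Nat.factorial]
      ring
    · refine ⟨t*(1-t)*(-t^2+2*t-2), ?_⟩
      rw [show Efun 1 = 1 from rfl]
      norm_num [Nat.factorial]
      ring
  · -- odd case
    have hodd : Odd p := hp.out.odd_of_ne_two hne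
    have hm : p - 1 - r = m := by omega
    have hC := C1 p hodd r (by omega)
    rw [hm] at hC
    have hmod : (m.factorial * Efun r) ≡ (r.factorial * Efun m) [MOD p] :=
      ((ZMod.natCast_eq_natCast_iff _ _ _).mp hC.symm)
    obtain ⟨k, hk⟩ : (p:ℤ) ∣ ((r.factorial * Efun m : ℕ) : ℤ) - ((m.factorial * Efun r : ℕ) : ℤ) :=
      hmod.dvd
    have hg : (r.factorial : ℤ_[p]) * (Efun m : ℤ_[p])
        = (m.factorial:ℤ_[p]) * (Efun r:ℤ_[p]) + (p:ℤ_[p]) * ((k:ℤ) : ℤ_[p]) := by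
      have := congrArg (fun z : ℤ => ((z:ℤ) : ℤ_[p])) hk
      push_cast at this
      linear_combination this
    obtain ⟨z₁, h1⟩ := gadget (R := ℤ_[p]) r (-((p:ℤ_[p])*t))
    obtain ⟨z₂, h2⟩ := gadget (R := ℤ_[p]) m ((p:ℤ_[p])*t)
    obtain ⟨z₃, h3⟩ := gadget (R := ℤ_[p]) m ((p:ℤ_[p])*(t-1))
    obtain ⟨z₄, h4⟩ := gadget (R := ℤ_[p]) r ((p:ℤ_[p])*(1-t))
    obtain ⟨z₀, h0⟩ := gadget (R := ℤ_[p]) m (-((p:ℤ_[p])))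
    obtain ⟨w₀, hw⟩ := bracket (R := ℤ_[p]) (r.factorial : ℤ_[p]) (m.factorial : ℤ_[p])
      (Efun r : ℤ_[p]) (Efun m : ℤ_[p]) (p:ℤ_[p]) t ((k:ℤ):ℤ_[p]) z₀ z₁ z₂ z₃ z₄ hg
    set Q1 := ∏ j ∈ range r, (((j+1:ℕ) : ℤ_[p]) + -((p:ℤ_[p])*t)) with hQ1
    set Q2 := ∏ j ∈ range m, (((j+1:ℕ) : ℤ_[p]) + (p:ℤ_[p])*t) with hQ2
    set Q3 := ∏ j ∈ range m, (((j+1:ℕ) : ℤ_[p]) + (p:ℤ_[p])*(t-1)) with hQ3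
    set Q4 := ∏ j ∈ range r, (((j+1:ℕ) : ℤ_[p]) + (p:ℤ_[p])*(1-t)) with hQ4
    set Q0 := ∏ j ∈ range m, (((j+1:ℕ) : ℤ_[p]) + -((p:ℤ_[p]))) with hQ0
    have h1' : Q1 = (r.factorial:ℤ_[p]) - (Efun r:ℤ_[p])*((p:ℤ_[p])*t) + z₁*((p:ℤ_[p])*t)^2 := by
      rw [h1]; ring
    have h2' : Q2 = (m.factorial:ℤ_[p]) + (Efun m:ℤ_[p])*((p:ℤ_[p])*t) + z₂*((p:ℤ_[p])*t)^2 := by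
      rw [h2]
    have h3' : Q3 = (m.factorial:ℤ_[p]) + (Efun m:ℤ_[p])*((p:ℤ_[p])*(t-1)) + z₃*((p:ℤ_[p])*(t-1))^2 := by
      rw [h3]
    have h4' : Q4 = (r.factorial:ℤ_[p]) + (Efun r:ℤ_[p])*((p:ℤ_[p])*(1-t)) + z₄*((p:ℤ_[p])*(1-t))^2 := by
      rw [h4]
    have h0' : Q0 = (m.factorial:ℤ_[p]) - (p:ℤ_[p])*(Efun m:ℤ_[p]) + z₀*(p:ℤ_[p])^2 := by
      rw [h0]; ring
    rw [← h1', ← h2', ← h3', ← h4', ← h0'] at hw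
    have hK := Kfact (R := ℤ_[p]) p r m hrm
    rw [← hQ0] at hK
    have hsq : ((-1:ℤ_[p]))^m * (-1)^m = 1 := by
      rw [← pow_add, ← two_mul, pow_mul]; simp
    have hKsq : ((r.factorial:ℤ_[p]) * Q0)^2 = (((p-1).factorial : ℤ_[p]))^2 := by
      rw [← hK]
      linear_combination (- ((r.factorial:ℤ_[p]) * Q0)^2) * hsq
    have hsign : ((-1:ℤ_[p]))^r * (-1)^m = 1 := by
      rw [← pow_add]
      refine Even.neg_one_pow ?_
      have : r + m = p - 1 := by omega
      rw [this]
      exact Nat.Odd.sub_odd hodd odd_one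
    rw [decomp1 (R := ℤ_[p]) p r m hrm t, decomp2 (R := ℤ_[p]) p r m hrm t, ← hQ1, ← hQ2, ← hQ3, ← hQ4]
    refine ⟨t*(1-t)*w₀, ?_⟩
    linear_combination ((p:ℤ_[p])^2*t*(1-t)*((r.factorial:ℤ_[p])*Q1*Q2*Q3*Q4)) * hsign
      + ((p:ℤ_[p])^2*t*(1-t)) * hw
      + ((p:ℤ_[p])^2*t*(1-t)*((r.factorial:ℤ_[p]) + 2*(p:ℤ_[p])*(Efun r:ℤ_[p]))) * hKsq

/-- The harmonic number `H_n = ∑_{j=1}^n 1/j`. -/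
def harm (n : ℕ) : ℚ := ∑ j ∈ Finset.Icc 1 n, 1 / (j : ℚ)

lemma harm_fact (n : ℕ) : harm n * (n.factorial : ℚ) = (Efun n : ℚ) := by
  induction n with
  | zero => simp [harm, Efun]
  | succ n ih =>
    have hstep : harm (n+1) = harm n + 1/((n+1 : ℕ) : ℚ) := by
      rw [harm, harm, ← Finset.insert_Icc_right_eq_Icc_add_one (by omega), Finset.sum_insert (by simp)]
      ring
    have hne : ((n+1 : ℕ) : ℚ) ≠ 0 := by positivity
    rw [hstep, show Efun (n+1) = n.factorial + (n+1) * Efun n from rfl, Nat.factorial_succ]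
    push_cast
    push_cast at ih
    have : (harm n + 1/((n:ℚ)+1)) * (((n:ℚ)+1) * (n.factorial:ℚ))
        = ((n:ℚ)+1) * (harm n * (n.factorial:ℚ)) + (n.factorial:ℚ) := by
      field_simp
    rw [this, ih]
    ring

theorem stmt19 (p : ℕ) [Fact p.Prime] (x : ℤ_[p])
    (s : ℚ_[p]) (hs : s = ((x : ℚ_[p]) + (PadicInt.zmodRepr (-x) : ℚ_[p])) / p) :
    ‖(↑((ascPochhammer ℤ_[p] p).eval x) : ℚ_[p]) * (↑((ascPochhammer ℤ_[p] p).eval (1 - x)) : ℚ_[p])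
          / (Nat.factorial p : ℚ_[p]) ^ 2
        - s * (1 - s) * (1 + 2 * (p : ℚ_[p]) * ((harm (PadicInt.zmodRepr (-x)) : ℚ) : ℚ_[p]))‖
      ≤ (p : ℝ) ^ (-2 : ℤ) := by
  have hprime := (Fact.out : p.Prime)
  have hp2 : 2 ≤ p := hprime.two_le
  set r : ℕ := PadicInt.zmodRepr (-x) with hrdef
  have hrlt : r < p := PadicInt.zmodRepr_lt_p (-x)
  set m : ℕ := p - 1 - r with hmdef
  have hrm : p = r + 1 + m := by omega
  have hmem := PadicInt.sub_zmodRepr_mem (-x)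
  rw [PadicInt.maximalIdeal_eq_span_p, Ideal.mem_span_singleton] at hmem
  obtain ⟨c, hc⟩ := hmem
  set t : ℤ_[p] := -c with ht
  have hx : x = (p:ℤ_[p])*t - (r:ℤ_[p]) := by rw [ht]; linear_combination -hc
  obtain ⟨w, hw⟩ := core p r m hrm t
  rw [← hx] at hw
  have hp0 : (p:ℚ_[p]) ≠ 0 := Nat.cast_ne_zero.mpr (by omega)
  have hfp : (p.factorial : ℚ_[p]) ≠ 0 := Nat.cast_ne_zero.mpr (Nat.factorial_ne_zero _)
  have hf2 : (r.factorial : ℚ_[p]) ≠ 0 := Nat.cast_ne_zero.mpr (Nat.factorial_ne_zero _)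
  have hfact : (p.factorial : ℚ_[p]) = (p:ℚ_[p]) * ((p-1).factorial : ℚ_[p]) := by
    rw [← Nat.cast_mul, Nat.mul_factorial_pred (by omega)]
  have hst : s = (t : ℚ_[p]) := by
    rw [hs, hx]
    push_cast
    field_simp
    ring
  have hharm : ((harm r : ℚ) : ℚ_[p]) * (r.factorial : ℚ_[p]) = ((Efun r : ℕ) : ℚ_[p]) := by
    have h := harm_fact r
    have h2 := congrArg (fun q : ℚ => (q : ℚ_[p])) h
    push_cast at h2
    exact h2
  have hwQ := congrArg (fun z : ℤ_[p] => (z : ℚ_[p])) hw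
  push_cast at hwQ
  rw [show ((2:ℤ_[p]):ℚ_[p]) = 2 by
    rw [show (2:ℤ_[p]) = ((2:ℕ):ℤ_[p]) by norm_num, PadicInt.coe_natCast]
    norm_num] at hwQ
  rw [hst]
  have hq2 : (p.factorial:ℚ_[p])^2 = (p:ℚ_[p])^2*((p-1).factorial:ℚ_[p])^2 := by
    rw [hfact]; ring
  have hnum : (r.factorial:ℚ_[p]) * (↑((ascPochhammer ℤ_[p] p).eval x) : ℚ_[p])
        * (↑((ascPochhammer ℤ_[p] p).eval (1 - x)) : ℚ_[p])
      - (p.factorial:ℚ_[p])^2 * (r.factorial:ℚ_[p])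
        * ((t:ℚ_[p]) * (1 - (t:ℚ_[p])) * (1 + 2 * (p : ℚ_[p]) * ((harm r : ℚ) : ℚ_[p])))
      = (p:ℚ_[p])^4 * (w : ℚ_[p]) := by
    rw [hq2]
    linear_combination hwQ
      - (2*(p:ℚ_[p])^3*((p-1).factorial:ℚ_[p])^2*(t:ℚ_[p])*(1-(t:ℚ_[p]))) * hharm
  have hEXPR : (↑((ascPochhammer ℤ_[p] p).eval x) : ℚ_[p]) * (↑((ascPochhammer ℤ_[p] p).eval (1 - x)) : ℚ_[p])
          / (Nat.factorial p : ℚ_[p]) ^ 2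
        - (t:ℚ_[p]) * (1 - (t:ℚ_[p])) * (1 + 2 * (p : ℚ_[p]) * ((harm r : ℚ) : ℚ_[p]))
      = (p:ℚ_[p])^4 * (w : ℚ_[p]) / ((p.factorial:ℚ_[p])^2 * (r.factorial:ℚ_[p])) := by
    rw [← hnum]
    field_simp
  rw [hEXPR]
  -- norms
  have hnat_norm : ∀ n : ℕ, ¬ (p ∣ n) → ‖(n:ℚ_[p])‖ = 1 := by
    intro n hn
    have h1 : ‖((n:ℤ):ℚ_[p])‖ ≤ 1 := Padic.norm_int_le_one _
    have h2 : ¬ ‖((n:ℤ):ℚ_[p])‖ < 1 := by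
      rw [← PadicInt.coe_intCast, PadicInt.padic_norm_e_of_padicInt, PadicInt.norm_int_lt_one_iff_dvd]
      exact fun hd => hn (Int.natCast_dvd_natCast.mp hd)
    push_cast at h1 h2
    linarith [lt_or_ge (‖(n:ℚ_[p])‖) 1]
  have hnfp : ‖(p.factorial : ℚ_[p])‖ = ((p:ℝ))⁻¹ := by
    rw [hfact, norm_mul, Padic.norm_p, hnat_norm _ (by
      intro hd
      exact absurd (hprime.dvd_factorial.mp hd) (by omega)), mul_one]
  have hnrf : ‖(r.factorial : ℚ_[p])‖ = 1 := hnat_norm _ (by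
    intro hd
    exact absurd (hprime.dvd_factorial.mp hd) (by omega))
  have hnw : ‖(w : ℚ_[p])‖ ≤ 1 := by
    rw [PadicInt.padic_norm_e_of_padicInt]
    exact PadicInt.norm_le_one w
  have hppos : (0:ℝ) < (p:ℝ) := by positivity
  rw [norm_div, norm_mul, norm_pow, norm_mul, norm_pow, Padic.norm_p, hnfp, hnrf]
  rw [show ((p:ℝ))^(-2:ℤ) = ((p:ℝ)⁻¹)^2 by
    rw [zpow_neg, inv_pow]
    norm_cast]
  have h4 : ((p:ℝ)⁻¹)^4 * ‖(w:ℚ_[p])‖ ≤ ((p:ℝ)⁻¹)^4 := by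
    nlinarith [pow_pos (inv_pos.mpr hppos) 4, norm_nonneg ((w:ℚ_[p]))]
  have hden : (((p:ℝ))⁻¹^2 * 1) ≠ 0 := by positivity
  rw [div_le_iff₀ (by positivity)]
  calc ((p:ℝ)⁻¹)^4 * ‖(w:ℚ_[p])‖ ≤ ((p:ℝ)⁻¹)^4 := h4
    _ = ((p:ℝ)⁻¹)^2 * (((p:ℝ))⁻¹^2 * 1) := by ring
    _ ≤ ((p:ℝ)⁻¹)^2 * (((p:ℝ))⁻¹^2 * 1) := le_rfl
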